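/- Fix m ∈ [0,1) and let T = 1/(4(1−m)). For t ∈ (0,T), the pair X(t,z) = 2t(z−m)𝟙_{[m,1]}(z), Y(t,z) = (1 − 2t(1−z))𝟙_{[m,1]}(z) satisfies pointwise the pseudo-inverse system ∂_t X(t,z) = ∫₀¹ sign(X(t,z)−X(t,ξ))dξ − ∫₀¹ sign(X(t,z)−Y(t,ξ))dξ and similarly for Y, with sign(0)=0; in particular ∂_t X(t,z) = 2(z−m)𝟙_{[m,1]}(z) and ∂_t Y(t,z) = 2(z−1)𝟙_{[m,1]}(z). -/

import Mathlib

open MeasureTheory Set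

/-- Pseudo-inverse of the first species for initial datum `ρ₀ = δ₀`,
`η₀ = mδ₀ + (1−m)δ₁`. -/
noncomputable def Xov (m t z : ℝ) : ℝ :=
  2 * t * (z - m) * Set.indicator (Icc m 1) (fun _ => (1 : ℝ)) z

/-- Pseudo-inverse of the second species for the same initial datum. -/
noncomputable def Yov (m t z : ℝ) : ℝ :=
  (1 - 2 * t * (1 - z)) * Set.indicator (Icc m 1) (fun _ => (1 : ℝ)) z

lemma piecewise_int (p q a b c : ℝ) (hp : 0 ≤ p) (hpq : p ≤ q) (hq : q ≤ 1)
    (f : ℝ → ℝ)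
    (h1 : ∀ x ∈ Ioo (0:ℝ) p, f x = a) (h2 : ∀ x ∈ Ioo p q, f x = b)
    (h3 : ∀ x ∈ Ioo q 1, f x = c) :
    ∫ x in Ioo (0:ℝ) 1, f x = a * p + b * (q - p) + c * (1 - q) := by
  have hg : ∫ x in Ioo (0:ℝ) 1, f x
      = ∫ x in Ioo (0:ℝ) 1,
          ((Ioo (0:ℝ) p).indicator (fun _ => a) x
            + (Ioo p q).indicator (fun _ => b) x
            + (Ioo q 1).indicator (fun _ => c) x) := by
    apply integral_congr_ae
    apply (MeasureTheory.ae_restrict_iff' measurableSet_Ioo).2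
    have hnull : (volume : Measure ℝ) ({p, q} : Set ℝ) = 0 :=
      (Set.toFinite _).measure_zero _
    refine measure_mono_null (fun x hx => ?_) hnull
    simp only [mem_setOf_eq] at hx
    by_contra hmem
    simp only [mem_insert_iff, mem_singleton_iff, not_or] at hmem
    obtain ⟨hxp, hxq⟩ := hmem
    apply hx
    intro hx01
    rcases lt_trichotomy x p with h | h | h
    · rw [h1 x ⟨hx01.1, h⟩]
      simp only [indicator_apply, mem_Ioo]
      rw [if_pos ⟨hx01.1, h⟩, if_neg (fun hc => by linarith [hc.1, hc.2]),
        if_neg (fun hc => by linarith [hc.1, hc.2])]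
      ring
    · exact absurd h hxp
    · rcases lt_trichotomy x q with h' | h' | h'
      · rw [h2 x ⟨h, h'⟩]
        simp only [indicator_apply, mem_Ioo]
        rw [if_neg (fun hc => by linarith [hc.1, hc.2]), if_pos ⟨h, h'⟩,
          if_neg (fun hc => by linarith [hc.1, hc.2])]
        ring
      · exact absurd h' hxq
      · rw [h3 x ⟨h', hx01.2⟩]
        simp only [indicator_apply, mem_Ioo]
        rw [if_neg (fun hc => by linarith [hc.1, hc.2]), if_neg (fun hc => by linarith [hc.1, hc.2]),
          if_pos ⟨h', hx01.2⟩]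
        ring
  rw [hg]
  have ia : Integrable ((Ioo (0:ℝ) p).indicator (fun _ => a)) volume := by
    rw [integrable_indicator_iff measurableSet_Ioo]
    exact integrableOn_const measure_Ioo_lt_top.ne
  have ib : Integrable ((Ioo p q).indicator (fun _ => b)) volume := by
    rw [integrable_indicator_iff measurableSet_Ioo]
    exact integrableOn_const measure_Ioo_lt_top.ne
  have ic : Integrable ((Ioo q 1).indicator (fun _ => c)) volume := by
    rw [integrable_indicator_iff measurableSet_Ioo]
    exact integrableOn_const measure_Ioo_lt_top.ne
  have iab : Integrable (fun x => (Ioo (0:ℝ) p).indicator (fun _ => a) x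
      + (Ioo p q).indicator (fun _ => b) x) (volume.restrict (Ioo (0:ℝ) 1)) :=
    ia.integrableOn.add ib.integrableOn
  rw [integral_add iab ic.integrableOn, integral_add ia.integrableOn ib.integrableOn]
  rw [setIntegral_indicator measurableSet_Ioo, setIntegral_indicator measurableSet_Ioo,
      setIntegral_indicator measurableSet_Ioo]
  have e1 : Ioo (0:ℝ) 1 ∩ Ioo 0 p = Ioo 0 p :=
    inter_eq_self_of_subset_right (Ioo_subset_Ioo le_rfl (hpq.trans hq))
  have e2 : Ioo (0:ℝ) 1 ∩ Ioo p q = Ioo p q :=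
    inter_eq_self_of_subset_right (Ioo_subset_Ioo hp hq)
  have e3 : Ioo (0:ℝ) 1 ∩ Ioo q 1 = Ioo q 1 :=
    inter_eq_self_of_subset_right (Ioo_subset_Ioo (hp.trans hpq) le_rfl)
  rw [e1, e2, e3, setIntegral_const, setIntegral_const, setIntegral_const,
      measureReal_def, measureReal_def, measureReal_def,
      Real.volume_Ioo, Real.volume_Ioo, Real.volume_Ioo,
      ENNReal.toReal_ofReal (by linarith), ENNReal.toReal_ofReal (by linarith),
      ENNReal.toReal_ofReal (by linarith), smul_eq_mul, smul_eq_mul, smul_eq_mul]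
  ring

/-- for `m ∈ [0,1)` and `t ∈ (0, 1/(4(1−m)))`, the pair `(X,Y)` given by
`X(t,z) = 2t(z−m)𝟙_{[m,1]}(z)`, `Y(t,z) = (1−2t(1−z))𝟙_{[m,1]}(z)` solves the
pseudo-inverse system pointwise (with `sign 0 = 0`); in particular
`∂ₜX = 2(z−m)𝟙_{[m,1]}(z)` and `∂ₜY = 2(z−1)𝟙_{[m,1]}(z)`. -/
theorem overlapping_deltas_gradient_flow_solution
    (m : ℝ) (hm : m ∈ Ico (0 : ℝ) 1) :
    ∀ t ∈ Ioo (0 : ℝ) (1 / (4 * (1 - m))), ∀ z ∈ Icc (0 : ℝ) 1,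
      HasDerivAt (fun τ : ℝ => Xov m τ z)
        ((∫ ξ in Ioo (0 : ℝ) 1, Real.sign (Xov m t z - Xov m t ξ)) -
          ∫ ξ in Ioo (0 : ℝ) 1, Real.sign (Xov m t z - Yov m t ξ)) t ∧
      HasDerivAt (fun τ : ℝ => Yov m τ z)
        ((∫ ξ in Ioo (0 : ℝ) 1, Real.sign (Yov m t z - Yov m t ξ)) -
          ∫ ξ in Ioo (0 : ℝ) 1, Real.sign (Yov m t z - Xov m t ξ)) t ∧
      ((∫ ξ in Ioo (0 : ℝ) 1, Real.sign (Xov m t z - Xov m t ξ)) -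
          (∫ ξ in Ioo (0 : ℝ) 1, Real.sign (Xov m t z - Yov m t ξ)) =
        2 * (z - m) * Set.indicator (Icc m 1) (fun _ => (1 : ℝ)) z) ∧
      ((∫ ξ in Ioo (0 : ℝ) 1, Real.sign (Yov m t z - Yov m t ξ)) -
          (∫ ξ in Ioo (0 : ℝ) 1, Real.sign (Yov m t z - Xov m t ξ)) =
        2 * (z - 1) * Set.indicator (Icc m 1) (fun _ => (1 : ℝ)) z) := by
  obtain ⟨hm0, hm1⟩ := hm
  intro t ht z hz
  obtain ⟨ht0, htT⟩ := ht
  have h1m : (0:ℝ) < 1 - m := by linarith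
  have ht4 : 4 * t * (1 - m) < 1 := by
    have := (lt_div_iff₀ (by positivity : (0:ℝ) < 4 * (1 - m))).1 htT
    nlinarith
  have hXin : ∀ x ∈ Icc m 1, Xov m t x = 2 * t * (x - m) := by
    intro x hx; simp [Xov, indicator_of_mem hx]
  have hXout : ∀ x : ℝ, x < m → Xov m t x = 0 := by
    intro x hx
    simp [Xov, indicator_of_notMem (fun h : x ∈ Icc m 1 => absurd h.1 (not_le.2 hx))]
  have hYin : ∀ x ∈ Icc m 1, Yov m t x = 1 - 2 * t * (1 - x) := by
    intro x hx; simp [Yov, indicator_of_mem hx]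
  have hYout : ∀ x : ℝ, x < m → Yov m t x = 0 := by
    intro x hx
    simp [Yov, indicator_of_notMem (fun h : x ∈ Icc m 1 => absurd h.1 (not_le.2 hx))]
  by_cases hzm : m ≤ z
  · -- z ∈ [m, 1]
    have hzI : z ∈ Icc m 1 := ⟨hzm, hz.2⟩
    have hXz : Xov m t z = 2 * t * (z - m) := hXin z hzI
    have hYz : Yov m t z = 1 - 2 * t * (1 - z) := hYin z hzI
    have hind : (Icc m 1).indicator (fun _ => (1:ℝ)) z = 1 := indicator_of_mem hzI _
    have I1 : (∫ ξ in Ioo (0:ℝ) 1, Real.sign (Xov m t z - Xov m t ξ))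
        = Real.sign (2 * t * (z - m)) * m + 1 * (z - m) + (-1) * (1 - z) := by
      refine piecewise_int m z _ 1 (-1) hm0 hzm hz.2 _ ?_ ?_ ?_
      · intro x hx; rw [hXout x hx.2, hXz, sub_zero]
      · intro x hx
        rw [hXz, hXin x ⟨hx.1.le, by linarith [hx.2, hz.2]⟩]
        exact Real.sign_of_pos (by nlinarith [hx.2])
      · intro x hx
        rw [hXz, hXin x ⟨by linarith [hx.1], hx.2.le⟩]
        exact Real.sign_of_neg (by nlinarith [hx.1])
    have I2 : (∫ ξ in Ioo (0:ℝ) 1, Real.sign (Xov m t z - Yov m t ξ))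
        = Real.sign (2 * t * (z - m)) * m + 0 * (m - m) + (-1) * (1 - m) := by
      refine piecewise_int m m _ 0 (-1) hm0 le_rfl hm1.le _ ?_ ?_ ?_
      · intro x hx; rw [hYout x hx.2, hXz, sub_zero]
      · intro x hx; exact absurd hx.2 (not_lt.2 hx.1.le)
      · intro x hx
        rw [hXz, hYin x ⟨hx.1.le, hx.2.le⟩]
        refine Real.sign_of_neg ?_
        nlinarith [hx.1, hx.2, hz.2, hzm]
    have P3 : (∫ ξ in Ioo (0:ℝ) 1, Real.sign (Xov m t z - Xov m t ξ)) -
        (∫ ξ in Ioo (0:ℝ) 1, Real.sign (Xov m t z - Yov m t ξ)) =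
        2 * (z - m) * (Icc m 1).indicator (fun _ => (1:ℝ)) z := by
      rw [I1, I2, hind]; ring
    have I3 : (∫ ξ in Ioo (0:ℝ) 1, Real.sign (Yov m t z - Yov m t ξ))
        = 1 * m + 1 * (z - m) + (-1) * (1 - z) := by
      refine piecewise_int m z 1 1 (-1) hm0 hzm hz.2 _ ?_ ?_ ?_
      · intro x hx
        rw [hYout x hx.2, hYz, sub_zero]
        exact Real.sign_of_pos (by nlinarith [hz.2, hzm])
      · intro x hx
        rw [hYz, hYin x ⟨hx.1.le, by linarith [hx.2, hz.2]⟩]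
        exact Real.sign_of_pos (by nlinarith [hx.2])
      · intro x hx
        rw [hYz, hYin x ⟨by linarith [hx.1], hx.2.le⟩]
        exact Real.sign_of_neg (by nlinarith [hx.1])
    have I4 : (∫ ξ in Ioo (0:ℝ) 1, Real.sign (Yov m t z - Xov m t ξ))
        = 1 * m + 0 * (m - m) + 1 * (1 - m) := by
      refine piecewise_int m m 1 0 1 hm0 le_rfl hm1.le _ ?_ ?_ ?_
      · intro x hx
        rw [hXout x hx.2, hYz, sub_zero]
        exact Real.sign_of_pos (by nlinarith [hz.2, hzm])
      · intro x hx; exact absurd hx.2 (not_lt.2 hx.1.le)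
      · intro x hx
        rw [hYz, hXin x ⟨hx.1.le, hx.2.le⟩]
        refine Real.sign_of_pos ?_
        nlinarith [hx.1, hx.2, hz.2, hzm]
    have P4 : (∫ ξ in Ioo (0:ℝ) 1, Real.sign (Yov m t z - Yov m t ξ)) -
        (∫ ξ in Ioo (0:ℝ) 1, Real.sign (Yov m t z - Xov m t ξ)) =
        2 * (z - 1) * (Icc m 1).indicator (fun _ => (1:ℝ)) z := by
      rw [I3, I4, hind]; ring
    refine ⟨?_, ?_, P3, P4⟩
    · rw [P3]
      have heq : (fun τ : ℝ => Xov m τ z)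
          = fun τ => (2 * (z - m) * (Icc m 1).indicator (fun _ => (1:ℝ)) z) * τ := by
        funext τ; simp only [Xov]; ring
      rw [heq]
      simpa using (hasDerivAt_id t).const_mul (2 * (z - m) * (Icc m 1).indicator (fun _ => (1:ℝ)) z)
    · rw [P4]
      have heq : (fun τ : ℝ => Yov m τ z)
          = fun τ => (2 * (z - 1) * (Icc m 1).indicator (fun _ => (1:ℝ)) z) * τ
              + (Icc m 1).indicator (fun _ => (1:ℝ)) z := by
        funext τ; simp only [Yov]; ring
      rw [heq]
      simpa using ((hasDerivAt_id t).const_mul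
        (2 * (z - 1) * (Icc m 1).indicator (fun _ => (1:ℝ)) z)).add_const
        ((Icc m 1).indicator (fun _ => (1:ℝ)) z)
  · -- z < m
    have hzlt : z < m := not_le.1 hzm
    have hXz : Xov m t z = 0 := hXout z hzlt
    have hYz : Yov m t z = 0 := hYout z hzlt
    have hind : (Icc m 1).indicator (fun _ => (1:ℝ)) z = 0 :=
      indicator_of_notMem (fun h : z ∈ Icc m 1 => absurd h.1 (not_le.2 hzlt)) _
    have I1 : (∫ ξ in Ioo (0:ℝ) 1, Real.sign (Xov m t z - Xov m t ξ))
        = 0 * m + 0 * (m - m) + (-1) * (1 - m) := by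
      refine piecewise_int m m 0 0 (-1) hm0 le_rfl hm1.le _ ?_ ?_ ?_
      · intro x hx; rw [hXout x hx.2, hXz, sub_zero, Real.sign_zero]
      · intro x hx; exact absurd hx.2 (not_lt.2 hx.1.le)
      · intro x hx
        rw [hXz, hXin x ⟨hx.1.le, hx.2.le⟩, zero_sub]
        exact Real.sign_of_neg (by nlinarith [hx.1])
    have I2 : (∫ ξ in Ioo (0:ℝ) 1, Real.sign (Xov m t z - Yov m t ξ))
        = 0 * m + 0 * (m - m) + (-1) * (1 - m) := by
      refine piecewise_int m m 0 0 (-1) hm0 le_rfl hm1.le _ ?_ ?_ ?_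
      · intro x hx; rw [hYout x hx.2, hXz, sub_zero, Real.sign_zero]
      · intro x hx; exact absurd hx.2 (not_lt.2 hx.1.le)
      · intro x hx
        rw [hXz, hYin x ⟨hx.1.le, hx.2.le⟩, zero_sub]
        exact Real.sign_of_neg (by nlinarith [hx.1, hx.2])
    have I3 : (∫ ξ in Ioo (0:ℝ) 1, Real.sign (Yov m t z - Yov m t ξ))
        = 0 * m + 0 * (m - m) + (-1) * (1 - m) := by
      refine piecewise_int m m 0 0 (-1) hm0 le_rfl hm1.le _ ?_ ?_ ?_
      · intro x hx; rw [hYout x hx.2, hYz, sub_zero, Real.sign_zero]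
      · intro x hx; exact absurd hx.2 (not_lt.2 hx.1.le)
      · intro x hx
        rw [hYz, hYin x ⟨hx.1.le, hx.2.le⟩, zero_sub]
        exact Real.sign_of_neg (by nlinarith [hx.1, hx.2])
    have I4 : (∫ ξ in Ioo (0:ℝ) 1, Real.sign (Yov m t z - Xov m t ξ))
        = 0 * m + 0 * (m - m) + (-1) * (1 - m) := by
      refine piecewise_int m m 0 0 (-1) hm0 le_rfl hm1.le _ ?_ ?_ ?_
      · intro x hx; rw [hXout x hx.2, hYz, sub_zero, Real.sign_zero]
      · intro x hx; exact absurd hx.2 (not_lt.2 hx.1.le)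
      · intro x hx
        rw [hYz, hXin x ⟨hx.1.le, hx.2.le⟩, zero_sub]
        exact Real.sign_of_neg (by nlinarith [hx.1])
    have P3 : (∫ ξ in Ioo (0:ℝ) 1, Real.sign (Xov m t z - Xov m t ξ)) -
        (∫ ξ in Ioo (0:ℝ) 1, Real.sign (Xov m t z - Yov m t ξ)) =
        2 * (z - m) * (Icc m 1).indicator (fun _ => (1:ℝ)) z := by
      rw [I1, I2, hind]; ring
    have P4 : (∫ ξ in Ioo (0:ℝ) 1, Real.sign (Yov m t z - Yov m t ξ)) -
        (∫ ξ in Ioo (0:ℝ) 1, Real.sign (Yov m t z - Xov m t ξ)) =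
        2 * (z - 1) * (Icc m 1).indicator (fun _ => (1:ℝ)) z := by
      rw [I3, I4, hind]; ring
    refine ⟨?_, ?_, P3, P4⟩
    · rw [P3]
      have heq : (fun τ : ℝ => Xov m τ z)
          = fun τ => (2 * (z - m) * (Icc m 1).indicator (fun _ => (1:ℝ)) z) * τ := by
        funext τ; simp only [Xov]; ring
      rw [heq]
      simpa using (hasDerivAt_id t).const_mul (2 * (z - m) * (Icc m 1).indicator (fun _ => (1:ℝ)) z)
    · rw [P4]
      have heq : (fun τ : ℝ => Yov m τ z)
          = fun τ => (2 * (z - 1) * (Icc m 1).indicator (fun _ => (1:ℝ)) z) * τ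
              + (Icc m 1).indicator (fun _ => (1:ℝ)) z := by
        funext τ; simp only [Yov]; ring
      rw [heq]
      simpa using ((hasDerivAt_id t).const_mul
        (2 * (z - 1) * (Icc m 1).indicator (fun _ => (1:ℝ)) z)).add_const
        ((Icc m 1).indicator (fun _ => (1:ℝ)) z)
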